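/- Let μ = a_1 δ_{y_1} + a_2 δ_{y_2} with distinct y_1, y_2 ∈ ℝ and nonzero a_1, a_2 ∈ ℂ, and let Y(ω) = F[μ](ω) + W(ω), ω ∈ [−Ω, Ω], be a measurement with |W(ω)| < σ for all ω ∈ [−Ω, Ω]. Let H be the 2×2 complex Hankel matrix with rows (Y(−Ω), Y(0)) and (Y(0), Y(Ω)), and let σ̂_2 = min_{x ∈ ℂ², ‖x‖_2 = 1} ‖H x‖_2 be its smallest singular value. If there exist â ∈ ℂ and ŷ ∈ ℝ such that the one-source measure μ̂ = â δ_{ŷ} is a σ-admissible measure of Y, i.e. |â e^{i ŷ ω} − Y(ω)| < σ for all ω ∈ [−Ω, Ω], then σ̂_2 < 2σ. -/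

import Mathlib

/-- **Singular value thresholding under a one-source admissible measure
(Theorem 5.1, part 2).**  Let `μ = a₁ δ_{y₁} + a₂ δ_{y₂}` with distinct `y₁, y₂ ∈ ℝ`
and nonzero amplitudes, and let `Y(ω) = F[μ](ω) + W(ω)` on `[−Ω, Ω]` with
`|W(ω)| < σ`.  Let `σ̂₂` be the smallest singular value of the `2×2` Hankel matrix
`H = [[Y(−Ω), Y(0)], [Y(0), Y(Ω)]]`.  If some one-source measure `μ̂ = â δ_{ŷ}` is a
σ-admissible measure of `Y`, then `σ̂₂ < 2σ`. -/
theorem hankel_min_singular_value_one_source_admissible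
    (Ω σ : ℝ) (hΩ : 0 < Ω) (hσ : 0 < σ)
    (y₁ y₂ : ℝ) (hy : y₁ ≠ y₂)
    (a₁ a₂ : ℂ) (ha₁ : a₁ ≠ 0) (ha₂ : a₂ ≠ 0)
    (W : ℝ → ℂ) (hW : ∀ ω ∈ Set.Icc (-Ω) Ω, ‖W ω‖ < σ)
    (Y : ℝ → ℂ)
    (hY : ∀ ω ∈ Set.Icc (-Ω) Ω,
      Y ω = a₁ * Complex.exp (Complex.I * (y₁ : ℂ) * (ω : ℂ))
        + a₂ * Complex.exp (Complex.I * (y₂ : ℂ) * (ω : ℂ)) + W ω)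
    (σ₂ : ℝ)
    (hσ₂ : σ₂ = sInf {r : ℝ | ∃ x₁ x₂ : ℂ,
      ‖x₁‖ ^ 2 + ‖x₂‖ ^ 2 = 1 ∧
      r = Real.sqrt (‖Y (-Ω) * x₁ + Y 0 * x₂‖ ^ 2
        + ‖Y 0 * x₁ + Y Ω * x₂‖ ^ 2)})
    (hadm : ∃ (ah : ℂ) (yh : ℝ), ∀ ω ∈ Set.Icc (-Ω) Ω,
      ‖ah * Complex.exp (Complex.I * (yh : ℂ) * (ω : ℂ)) - Y ω‖ < σ) :
    σ₂ < 2 * σ := by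
  obtain ⟨ah, yh, hadm⟩ := hadm
  have hmemA : (-Ω) ∈ Set.Icc (-Ω) Ω := ⟨le_refl _, by linarith⟩
  have hmem0 : (0:ℝ) ∈ Set.Icc (-Ω) Ω := ⟨by linarith, by linarith⟩
  have hmemB : Ω ∈ Set.Icc (-Ω) Ω := ⟨by linarith, le_refl _⟩
  have hs2 : (0:ℝ) < Real.sqrt 2 := Real.sqrt_pos.mpr (by norm_num)
  have hs2ne : (Real.sqrt 2 : ℂ) ≠ 0 := by
    exact_mod_cast (Complex.ofReal_ne_zero.mpr (ne_of_gt hs2))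
  set e : ℂ := Complex.exp (Complex.I * (yh:ℂ) * (Ω:ℂ)) with he
  have habs_e : ‖e‖ = 1 := by
    rw [he, Complex.norm_exp]
    norm_num [Complex.mul_re, Complex.mul_im]
  set x₁ : ℂ := e / (Real.sqrt 2 : ℂ) with hx₁
  set x₂ : ℂ := -1 / (Real.sqrt 2 : ℂ) with hx₂
  have habs_x₁ : ‖x₁‖ = 1 / Real.sqrt 2 := by
    rw [hx₁, norm_div, habs_e, Complex.norm_real, Real.norm_eq_abs, abs_of_pos hs2]
  have habs_x₂ : ‖x₂‖ = 1 / Real.sqrt 2 := by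
    rw [hx₂, norm_div, Complex.norm_real, Real.norm_eq_abs, abs_of_pos hs2]
    norm_num
  have hnorm : ‖x₁‖ ^ 2 + ‖x₂‖ ^ 2 = 1 := by
    rw [habs_x₁, habs_x₂, div_pow, Real.sq_sqrt (by norm_num : (0:ℝ) ≤ 2)]
    norm_num
  -- the one-source exponentials
  have hexpA : Complex.exp (Complex.I * (yh:ℂ) * ((-Ω : ℝ):ℂ)) * e = 1 := by
    rw [he, ← Complex.exp_add, show Complex.I * (yh:ℂ) * ((-Ω : ℝ):ℂ)
      + Complex.I * (yh:ℂ) * (Ω:ℂ) = 0 by push_cast; ring, Complex.exp_zero]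
  have hexp0 : Complex.exp (Complex.I * (yh:ℂ) * ((0 : ℝ):ℂ)) = 1 := by
    norm_num
  -- key algebraic cancellations
  have key1 : Y (-Ω) * x₁ + Y 0 * x₂
      = (Y (-Ω) - ah * Complex.exp (Complex.I * (yh:ℂ) * ((-Ω : ℝ):ℂ))) * x₁
      + (Y 0 - ah * Complex.exp (Complex.I * (yh:ℂ) * ((0 : ℝ):ℂ))) * x₂ := by
    rw [hexp0, hx₁, hx₂]
    linear_combination (ah / (Real.sqrt 2 : ℂ)) * hexpA
  have key2 : Y 0 * x₁ + Y Ω * x₂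
      = (Y 0 - ah * Complex.exp (Complex.I * (yh:ℂ) * ((0 : ℝ):ℂ))) * x₁
      + (Y Ω - ah * Complex.exp (Complex.I * (yh:ℂ) * ((Ω : ℝ):ℂ))) * x₂ := by
    rw [hexp0, hx₁, hx₂, he]
    ring
  have hb : ∀ ω ∈ Set.Icc (-Ω) Ω,
      ‖Y ω - ah * Complex.exp (Complex.I * (yh:ℂ) * (ω:ℂ))‖ < σ := by
    intro ω hω
    rw [norm_sub_rev]
    exact hadm ω hω
  have hbound : ∀ u v : ℂ, ‖u‖ < σ → ‖v‖ < σ →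
      ‖u * x₁ + v * x₂‖ < σ * Real.sqrt 2 := by
    intro u v hu hv
    calc ‖u * x₁ + v * x₂‖
        ≤ ‖u * x₁‖ + ‖v * x₂‖ := norm_add_le _ _
      _ = ‖u‖ * (1 / Real.sqrt 2) + ‖v‖ * (1 / Real.sqrt 2) := by
          rw [norm_mul, norm_mul, habs_x₁, habs_x₂]
      _ < σ * (1 / Real.sqrt 2) + σ * (1 / Real.sqrt 2) := by
          apply add_lt_add
          · exact mul_lt_mul_of_pos_right hu (by positivity)
          · exact mul_lt_mul_of_pos_right hv (by positivity)
      _ = σ * Real.sqrt 2 := by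
          have h22 : Real.sqrt 2 * Real.sqrt 2 = 2 := Real.mul_self_sqrt (by norm_num)
          have h2s : (1:ℝ)/Real.sqrt 2 + 1/Real.sqrt 2 = Real.sqrt 2 := by
            rw [← add_div, div_eq_iff (ne_of_gt hs2), h22]
            norm_num
          rw [← mul_add, h2s]
  have h1 : ‖Y (-Ω) * x₁ + Y 0 * x₂‖ < σ * Real.sqrt 2 := by
    rw [key1]
    exact hbound _ _ (hb _ hmemA) (hb _ hmem0)
  have h2 : ‖Y 0 * x₁ + Y Ω * x₂‖ < σ * Real.sqrt 2 := by
    rw [key2]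
    exact hbound _ _ (hb _ hmem0) (hb _ hmemB)
  set r : ℝ := Real.sqrt (‖Y (-Ω) * x₁ + Y 0 * x₂‖ ^ 2
        + ‖Y 0 * x₁ + Y Ω * x₂‖ ^ 2) with hr
  have hrlt : r < 2 * σ := by
    rw [hr, show (2:ℝ) * σ = 2 * σ from rfl]
    rw [Real.sqrt_lt' (by linarith)]
    have s1 : ‖Y (-Ω) * x₁ + Y 0 * x₂‖ ^ 2 < (σ * Real.sqrt 2) ^ 2 := by
      apply pow_lt_pow_left₀ h1 (norm_nonneg _) (by norm_num)
    have s2 : ‖Y 0 * x₁ + Y Ω * x₂‖ ^ 2 < (σ * Real.sqrt 2) ^ 2 := by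
      apply pow_lt_pow_left₀ h2 (norm_nonneg _) (by norm_num)
    have : (σ * Real.sqrt 2) ^ 2 = 2 * σ ^ 2 := by
      rw [mul_pow, Real.sq_sqrt (by norm_num : (2:ℝ) ≥ 0)]; ring
    nlinarith
  have hmem : r ∈ {r : ℝ | ∃ x₁ x₂ : ℂ,
      ‖x₁‖ ^ 2 + ‖x₂‖ ^ 2 = 1 ∧
      r = Real.sqrt (‖Y (-Ω) * x₁ + Y 0 * x₂‖ ^ 2
        + ‖Y 0 * x₁ + Y Ω * x₂‖ ^ 2)} := ⟨x₁, x₂, hnorm, hr⟩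
  have hbdd : BddBelow {r : ℝ | ∃ x₁ x₂ : ℂ,
      ‖x₁‖ ^ 2 + ‖x₂‖ ^ 2 = 1 ∧
      r = Real.sqrt (‖Y (-Ω) * x₁ + Y 0 * x₂‖ ^ 2
        + ‖Y 0 * x₁ + Y Ω * x₂‖ ^ 2)} := by
    refine ⟨0, ?_⟩
    rintro t ⟨u, v, -, ht⟩
    rw [ht]
    exact Real.sqrt_nonneg _
  calc σ₂ ≤ r := hσ₂ ▸ csInf_le hbdd hmem
    _ < 2 * σ := hrlt
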